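/- Let E be a complex Banach space and let U : [0,∞) → (E →L E) satisfy U 0 = id, U (t₁ + t₂) = U t₁ ∘ U t₂ for all t₁, t₂ ≥ 0, and ‖U t‖ ≤ 1 for all t ≥ 0. Let ω > 0 and T₀ ≥ 0, and suppose the function t ↦ (e^{ωt} ‖U t‖)² is integrable on [T₀, ∞). Then there exists a constant M ≥ 1 such that ‖U t‖ ≤ M e^{-ωt} for all t ≥ 0. -/

import Mathlib

open MeasureTheory

/-- A contraction semigroup `U` on a complex Banach space satisfying the integrability
estimate `∫_{T₀}^∞ (e^{ωt} ‖U t‖)² dt < ∞` with `ω > 0`, `T₀ ≥ 0` is exponentially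
bounded: `‖U t‖ ≤ M e^{-ωt}` for some `M ≥ 1` and all `t ≥ 0`. -/
theorem semigroup_exp_bound_of_integrable
    {E : Type*} [NormedAddCommGroup E] [NormedSpace ℂ E] [CompleteSpace E]
    (U : ℝ → E →L[ℂ] E)
    (h0 : U 0 = ContinuousLinearMap.id ℂ E)
    (hsg : ∀ t₁ t₂ : ℝ, 0 ≤ t₁ → 0 ≤ t₂ → U (t₁ + t₂) = (U t₁).comp (U t₂))
    (hcontr : ∀ t : ℝ, 0 ≤ t → ‖U t‖ ≤ 1)
    (ω T₀ : ℝ) (hω : 0 < ω) (hT₀ : 0 ≤ T₀)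
    (hint : IntegrableOn (fun t => (Real.exp (ω * t) * ‖U t‖) ^ 2) (Set.Ici T₀) volume) :
    ∃ M : ℝ, 1 ≤ M ∧ ∀ t : ℝ, 0 ≤ t → ‖U t‖ ≤ M * Real.exp (-(ω * t)) := by
  set f : ℝ → ℝ := fun t => (Real.exp (ω * t) * ‖U t‖) ^ 2 with hfdef
  -- monotonicity of the norm
  have hmono : ∀ τ t : ℝ, 0 ≤ τ → τ ≤ t → ‖U t‖ ≤ ‖U τ‖ := by
    intro τ t hτ hle
    have h1 : U t = (U (t - τ)).comp (U τ) := by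
      have := hsg (t - τ) τ (by linarith) hτ
      simpa [sub_add_cancel] using this
    calc ‖U t‖ = ‖(U (t - τ)).comp (U τ)‖ := by rw [h1]
      _ ≤ ‖U (t - τ)‖ * ‖U τ‖ := ContinuousLinearMap.opNorm_comp_le _ _
      _ ≤ 1 * ‖U τ‖ :=
          mul_le_mul_of_nonneg_right (hcontr _ (by linarith)) (norm_nonneg _)
      _ = ‖U τ‖ := one_mul _
  set C := ∫ τ in Set.Ici T₀, f τ with hCdef
  have hC0 : 0 ≤ C := setIntegral_nonneg measurableSet_Ici (fun x _ => by positivity)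
  -- key bound for t ≥ T₀ + 1
  have key : ∀ t : ℝ, T₀ + 1 ≤ t →
      ‖U t‖ ≤ Real.sqrt C * Real.exp ω * Real.exp (-(ω * t)) := by
    intro t ht
    have hIcc : Set.Icc (t - 1) t ⊆ Set.Ici T₀ := by
      intro x hx
      have := hx.1
      exact le_trans (by linarith) this
    have hintI : IntegrableOn f (Set.Icc (t - 1) t) volume := hint.mono_set hIcc
    have hconst : ∀ x ∈ Set.Icc (t - 1) t,
        (Real.exp (ω * (t - 1)) * ‖U t‖) ^ 2 ≤ f x := by
      intro x hx
      have hx0 : 0 ≤ x := le_trans (by linarith) hx.1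
      have h1 : Real.exp (ω * (t - 1)) ≤ Real.exp (ω * x) :=
        Real.exp_le_exp.2 (by nlinarith [hx.1])
      have h2 : ‖U t‖ ≤ ‖U x‖ := hmono x t hx0 hx.2
      have : Real.exp (ω * (t - 1)) * ‖U t‖ ≤ Real.exp (ω * x) * ‖U x‖ :=
        mul_le_mul h1 h2 (norm_nonneg _) (Real.exp_pos _).le
      exact pow_le_pow_left₀ (by positivity) this 2
    have hlow : (Real.exp (ω * (t - 1)) * ‖U t‖) ^ 2 * 1 ≤ ∫ x in Set.Icc (t - 1) t, f x := by
      have hm := Real.volume_Icc (a := t - 1) (b := t)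
      have hvol : (volume (Set.Icc (t - 1) t)).toReal = 1 := by
        rw [hm]; simp
      have := setIntegral_ge_of_const_le (μ := volume) measurableSet_Icc
        (by rw [hm]; exact ENNReal.ofReal_ne_top) hconst hintI
      rw [Measure.real, hvol, smul_eq_mul] at this; linarith
    have hup : (∫ x in Set.Icc (t - 1) t, f x) ≤ C := by
      apply setIntegral_mono_set hint
      · filter_upwards with x using by positivity
      · exact HasSubset.Subset.eventuallyLE hIcc
    have hsq : (Real.exp (ω * (t - 1)) * ‖U t‖) ^ 2 ≤ C := by
      nlinarith [hlow, hup]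
    have hroot : Real.exp (ω * (t - 1)) * ‖U t‖ ≤ Real.sqrt C := by
      have := Real.sqrt_le_sqrt hsq
      rwa [Real.sqrt_sq (by positivity)] at this
    have hexp : Real.exp (ω * (t - 1)) = Real.exp (ω * t) / Real.exp ω := by
      rw [eq_div_iff (Real.exp_pos _).ne', ← Real.exp_add]; ring_nf
    have hpos : 0 < Real.exp (ω * (t - 1)) := Real.exp_pos _
    calc ‖U t‖ = (Real.exp (ω * (t - 1)) * ‖U t‖) / Real.exp (ω * (t - 1)) := by
          field_simp
      _ ≤ Real.sqrt C / Real.exp (ω * (t - 1)) := by gcongr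
      _ = Real.sqrt C * Real.exp ω * Real.exp (-(ω * t)) := by
          rw [hexp, Real.exp_neg]
          field_simp
  refine ⟨max 1 (max (Real.exp (ω * (T₀ + 1))) (Real.sqrt C * Real.exp ω)),
    le_max_left _ _, ?_⟩
  intro t ht
  rcases le_or_gt t (T₀ + 1) with hcase | hcase
  · have h1 : ‖U t‖ ≤ 1 := hcontr t ht
    have h2 : (1 : ℝ) ≤ Real.exp (ω * (T₀ + 1)) * Real.exp (-(ω * t)) := by
      rw [← Real.exp_add]
      have : 0 ≤ ω * (T₀ + 1) + -(ω * t) := by nlinarith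
      calc (1 : ℝ) = Real.exp 0 := (Real.exp_zero).symm
        _ ≤ _ := Real.exp_le_exp.2 this
    calc ‖U t‖ ≤ 1 := h1
      _ ≤ Real.exp (ω * (T₀ + 1)) * Real.exp (-(ω * t)) := h2
      _ ≤ _ := by
          gcongr
          exact le_trans (le_max_left _ _) (le_max_right _ _)
  · calc ‖U t‖ ≤ Real.sqrt C * Real.exp ω * Real.exp (-(ω * t)) := key t hcase.le
      _ ≤ _ := by
          gcongr
          exact le_trans (le_max_right _ _) (le_max_right _ _)
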